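/- For every natural number n and every real r > 0, the generalized geometric polynomial admits the integral representation ω_{n,r}(x) = (1/Γ(r)) ∫_0^∞ λ^{r-1} φ_n(xλ) e^{-λ} dλ for all real x. -/

import Mathlib

open Finset MeasureTheory Real

/-- Stirling numbers of the second kind. -/
def stirling2 : ℕ → ℕ → ℕ
  | 0, 0 => 1
  | 0, _ + 1 => 0
  | _ + 1, 0 => 0
  | n + 1, k + 1 => (k + 1) * stirling2 n (k + 1) + stirling2 n k

/-- The generalized geometric polynomials `ω_{n,r}(x) = Σ_{k=0}^n S(n,k) (r)_k x^k`,
where `(r)_k` is the rising factorial (Pochhammer symbol). -/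
noncomputable def geomPoly (n : ℕ) (r x : ℝ) : ℝ :=
  ∑ k ∈ Finset.range (n + 1), (stirling2 n k : ℝ) * (ascPochhammer ℝ k).eval r * x ^ k

/-- The exponential polynomials `φ_n(x) = Σ_{k=0}^n S(n,k) x^k`. -/
noncomputable def expPoly (n : ℕ) (x : ℝ) : ℝ :=
  ∑ k ∈ Finset.range (n + 1), (stirling2 n k : ℝ) * x ^ k

lemma Gamma_add_nat_eq (r : ℝ) (hr : 0 < r) (k : ℕ) :
    Real.Gamma (r + k) = Real.Gamma r * (ascPochhammer ℝ k).eval r := by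
  induction k with
  | zero => simp
  | succ k ih =>
    have h1 : r + (k + 1 : ℕ) = (r + k) + 1 := by push_cast; ring
    rw [h1, Real.Gamma_add_one (by positivity), ih, ascPochhammer_succ_right]
    simp [Polynomial.eval_mul]
    ring

lemma term_integrable (r : ℝ) (hr : 0 < r) (k : ℕ) (c : ℝ) :
    IntegrableOn (fun l : ℝ => l ^ (r - 1) * (c * l ^ k) * Real.exp (-l))
      (Set.Ioi (0 : ℝ)) := by
  have h2 : IntegrableOn (fun l : ℝ => c * (Real.exp (-l) * l ^ (r + k - 1)))
      (Set.Ioi (0 : ℝ)) :=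
    (Real.GammaIntegral_convergent (s := r + k) (by positivity)).const_mul c
  refine h2.congr_fun (fun l hl => ?_) measurableSet_Ioi
  have hl' : (0 : ℝ) < l := hl
  beta_reduce
  rw [show r + k - 1 = (r - 1) + k by ring, Real.rpow_add hl', Real.rpow_natCast]
  ring

lemma term_integral (r : ℝ) (hr : 0 < r) (k : ℕ) (c : ℝ) :
    ∫ l in Set.Ioi (0 : ℝ), l ^ (r - 1) * (c * l ^ k) * Real.exp (-l)
      = c * Real.Gamma (r + k) := by
  rw [Real.Gamma_eq_integral (by positivity), ← integral_const_mul]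
  refine setIntegral_congr_fun measurableSet_Ioi (fun l hl => ?_)
  have hl' : (0 : ℝ) < l := hl
  rw [show r + k - 1 = (r - 1) + k by ring, Real.rpow_add hl', Real.rpow_natCast]
  ring

/-- For every natural `n` and real `r > 0`,
`ω_{n,r}(x) = (1/Γ(r)) ∫_0^∞ λ^{r-1} φ_n(xλ) e^{-λ} dλ` for all real `x`. -/
theorem geomPoly_integral_repr (n : ℕ) (r : ℝ) (hr : 0 < r) (x : ℝ) :
    geomPoly n r x =
      (1 / Real.Gamma r) *
        ∫ l in Set.Ioi (0 : ℝ), l ^ (r - 1) * expPoly n (x * l) * Real.exp (-l) := by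
  have hG : Real.Gamma r ≠ 0 := (Real.Gamma_pos_of_pos hr).ne'
  have key : ∀ l : ℝ, l ^ (r - 1) * expPoly n (x * l) * Real.exp (-l)
      = ∑ k ∈ Finset.range (n + 1),
          l ^ (r - 1) * ((stirling2 n k : ℝ) * x ^ k * l ^ k) * Real.exp (-l) := by
    intro l
    simp only [expPoly, Finset.mul_sum, Finset.sum_mul]
    exact Finset.sum_congr rfl fun k _ => by ring
  rw [show (∫ l in Set.Ioi (0:ℝ), l ^ (r - 1) * expPoly n (x * l) * Real.exp (-l))
      = ∫ l in Set.Ioi (0:ℝ), ∑ k ∈ Finset.range (n + 1),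
          l ^ (r - 1) * ((stirling2 n k : ℝ) * x ^ k * l ^ k) * Real.exp (-l)
      from integral_congr_ae (Filter.Eventually.of_forall fun l => key l)]
  rw [integral_finset_sum _ (fun k _ => term_integrable r hr k _)]
  rw [Finset.mul_sum, geomPoly]
  refine Finset.sum_congr rfl fun k _ => ?_
  rw [term_integral r hr k, Gamma_add_nat_eq r hr k]
  field_simp
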